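/- For every x > 0, −log(1 − e^{−ax}) ≤ ∫_x^∞ (e^{−t}/t) dt ≤ −log(1 − e^{−x}), where a = e^{0.5772...} = e^γ with γ the Euler–Mascheroni constant. -/

import Mathlib

open MeasureTheory Real

open Set

lemma intOn_exp_div {x : ℝ} (hx : 0 < x) :
    IntegrableOn (fun t => Real.exp (-t) / t) (Ioi x) := by
  have h1 : IntegrableOn (fun t => Real.exp (-t) / x) (Ioi x) := by
    have := (exp_neg_integrableOn_Ioi x zero_lt_one).div_const x
    simpa [IntegrableOn] using this
  refine h1.mono' ?_ ?_
  · exact ((Real.continuous_exp.comp continuous_neg).continuousOn.div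
      continuousOn_id (fun t ht => (hx.trans ht).ne')).aestronglyMeasurable measurableSet_Ioi
  · filter_upwards [ae_restrict_mem measurableSet_Ioi] with t ht
    have htpos : 0 < t := hx.trans ht
    rw [Real.norm_eq_abs, abs_of_pos (by positivity)]
    exact div_le_div_of_nonneg_left (Real.exp_pos _).le hx ht.le

lemma intOn_t_exp : IntegrableOn (fun t => t * Real.exp (-t)) (Ioi (0:ℝ)) := by
  have := Real.GammaIntegral_convergent (s := 2) (by norm_num)
  refine this.congr_fun (fun t ht => ?_) measurableSet_Ioi
  rw [show (2:ℝ) - 1 = 1 by norm_num]; simp only [Real.rpow_one]; ring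

lemma intOn_exp_log : IntegrableOn (fun t => Real.exp (-t) * Real.log t) (Ioi (0:ℝ)) := by
  have hmeas : AEStronglyMeasurable (fun t => Real.exp (-t) * Real.log t)
      (volume.restrict (Ioi (0:ℝ))) :=
    ((Real.measurable_exp.comp measurable_neg).mul Real.measurable_log).aestronglyMeasurable
  have h01 : IntegrableOn (fun t => Real.exp (-t) * Real.log t) (Ioc (0:ℝ) 1) := by
    have hg : IntegrableOn (fun t : ℝ => 2 * t ^ (-(1:ℝ)/2)) (Ioc (0:ℝ) 1) := by
      have := (intervalIntegral.intervalIntegrable_rpow' (a := 0) (b := 1)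
        (r := -(1:ℝ)/2) (by norm_num)).const_mul 2
      simpa [intervalIntegrable_iff, uIoc_of_le (zero_le_one' ℝ)] using this
    refine hg.mono' (hmeas.mono_set Ioc_subset_Ioi_self) ?_
    filter_upwards [ae_restrict_mem measurableSet_Ioc] with t ht
    have ht0 : 0 < t := ht.1
    have h1 : |Real.log t| ≤ 2 * t ^ (-(1:ℝ)/2) := by
      have hs : 0 < Real.sqrt t := Real.sqrt_pos.2 ht0
      have : -Real.log t = 2 * Real.log (1 / Real.sqrt t) := by
        rw [Real.log_div one_ne_zero hs.ne', Real.log_one, Real.log_sqrt ht0.le]; ring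
      have hle : Real.log (1 / Real.sqrt t) ≤ 1 / Real.sqrt t :=
        (Real.log_le_sub_one_of_pos (by positivity)).trans (by linarith)
      have habs : |Real.log t| = -Real.log t := by
        rw [abs_of_nonpos (Real.log_nonpos ht0.le ht.2)]
      rw [habs, this]
      have : (t : ℝ) ^ (-(1:ℝ)/2) = 1 / Real.sqrt t := by
        rw [show -(1:ℝ)/2 = -(1/2) by ring, Real.rpow_neg ht0.le, ← Real.sqrt_eq_rpow,
          one_div]
      rw [this]; linarith
    calc ‖Real.exp (-t) * Real.log t‖ = Real.exp (-t) * |Real.log t| := by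
          rw [norm_mul, Real.norm_eq_abs, Real.norm_eq_abs, abs_of_pos (Real.exp_pos _)]
      _ ≤ 1 * (2 * t ^ (-(1:ℝ)/2)) := by
          refine mul_le_mul (Real.exp_le_one_iff.2 (by linarith)) h1 (abs_nonneg _) zero_le_one
      _ = 2 * t ^ (-(1:ℝ)/2) := by ring
  have h1i : IntegrableOn (fun t => Real.exp (-t) * Real.log t) (Ioi (1:ℝ)) := by
    refine (intOn_t_exp.mono_set (Ioi_subset_Ioi zero_le_one)).mono'
      (hmeas.mono_set (Ioi_subset_Ioi zero_le_one)) ?_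
    filter_upwards [ae_restrict_mem measurableSet_Ioi] with t ht
    have ht1 : (1:ℝ) < t := ht
    have h1 : |Real.log t| ≤ t := by
      rw [abs_of_nonneg (Real.log_nonneg ht1.le)]
      linarith [Real.log_le_sub_one_of_pos (by linarith : (0:ℝ) < t)]
    calc ‖Real.exp (-t) * Real.log t‖ = Real.exp (-t) * |Real.log t| := by
          rw [norm_mul, Real.norm_eq_abs, Real.norm_eq_abs, abs_of_pos (Real.exp_pos _)]
      _ ≤ Real.exp (-t) * t := by
          exact mul_le_mul_of_nonneg_left h1 (Real.exp_pos _).le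
      _ = t * Real.exp (-t) := by ring
  have : Ioi (0:ℝ) = Ioc 0 1 ∪ Ioi 1 := (Ioc_union_Ioi_eq_Ioi zero_le_one).symm
  rw [this]
  exact integrableOn_union.2 ⟨h01, h1i⟩

lemma integral_exp_log :
    ∫ t in Ioi (0:ℝ), Real.exp (-t) * Real.log t = -Real.eulerMascheroniConstant := by
  have hwork : HasDerivAt Complex.GammaIntegral
      (∫ t : ℝ in Ioi 0, (t:ℂ) ^ ((1:ℂ) - 1) * (Real.log t * Real.exp (-t))) 1 :=
    Complex.hasDerivAt_GammaIntegral (by norm_num)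
  have heq : Complex.Gamma =ᶠ[nhds (1:ℂ)] Complex.GammaIntegral := by
    filter_upwards [(isOpen_lt continuous_const Complex.continuous_re).mem_nhds
      (by norm_num : (0:ℂ).re < (1:ℂ).re)] with s hs
    exact Complex.Gamma_eq_integral hs
  have h2 : HasDerivAt Complex.Gamma
      (∫ t : ℝ in Ioi 0, (t:ℂ) ^ ((1:ℂ) - 1) * (Real.log t * Real.exp (-t))) 1 :=
    hwork.congr_of_eventuallyEq heq
  have h3 := Complex.hasDerivAt_Gamma_one
  have h4 : (∫ t : ℝ in Ioi 0, (t:ℂ) ^ ((1:ℂ) - 1) * (Real.log t * Real.exp (-t)))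
      = (-Real.eulerMascheroniConstant : ℂ) := by
    have := h2.unique h3
    simpa using this
  have h5 : (∫ t : ℝ in Ioi 0, (t:ℂ) ^ ((1:ℂ) - 1) * (Real.log t * Real.exp (-t)))
      = ((∫ t in Ioi (0:ℝ), Real.exp (-t) * Real.log t : ℝ) : ℂ) := by
    rw [show ((∫ t in Ioi (0:ℝ), Real.exp (-t) * Real.log t : ℝ) : ℂ)
        = ∫ t in Ioi (0:ℝ), ((Real.exp (-t) * Real.log t : ℝ) : ℂ) from (integral_ofReal).symm]
    refine setIntegral_congr_fun measurableSet_Ioi (fun t ht => ?_)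
    push_cast
    rw [sub_self, Complex.cpow_zero]
    ring
  rw [h5] at h4
  exact_mod_cast h4

noncomputable def E (x : ℝ) : ℝ := ∫ t in Ioi x, Real.exp (-t) / t

lemma tendsto_exp_log_atTop :
    Filter.Tendsto (fun t => -(Real.exp (-t) * Real.log t)) Filter.atTop (nhds 0) := by
  have h1 : Filter.Tendsto (fun t : ℝ => -(t * Real.exp (-t))) Filter.atTop (nhds 0) := by
    have := Real.tendsto_pow_mul_exp_neg_atTop_nhds_zero 1
    simpa using this.neg
  have h2 : Filter.Tendsto (fun t : ℝ => (0:ℝ)) Filter.atTop (nhds 0) := tendsto_const_nhds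
  refine tendsto_of_tendsto_of_tendsto_of_le_of_le' h1 h2 ?_ ?_
  · filter_upwards [Filter.eventually_ge_atTop (1:ℝ)] with t ht
    have : Real.log t ≤ t := by
      linarith [Real.log_le_sub_one_of_pos (by linarith : (0:ℝ) < t)]
    nlinarith [Real.exp_pos (-t), Real.log_nonneg ht]
  · filter_upwards [Filter.eventually_ge_atTop (1:ℝ)] with t ht
    nlinarith [Real.exp_pos (-t), Real.log_nonneg ht]

lemma E_eq {x : ℝ} (hx : 0 < x) :
    E x = (∫ t in Ioi x, Real.exp (-t) * Real.log t) - Real.exp (-x) * Real.log x := by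
  have hderiv : ∀ t ∈ Ioi x, HasDerivAt (fun t => -(Real.exp (-t) * Real.log t))
      (Real.exp (-t) * Real.log t - Real.exp (-t) / t) t := by
    intro t ht
    have htpos : 0 < t := hx.trans ht
    have h1 : HasDerivAt (fun t : ℝ => Real.exp (-t)) (-Real.exp (-t)) t := by
      simpa [Function.comp_def] using (Real.hasDerivAt_exp (-t)).comp t (hasDerivAt_neg t)
    have h2 : HasDerivAt Real.log t⁻¹ t := Real.hasDerivAt_log htpos.ne'
    have := (h1.mul h2).neg
    refine this.congr_deriv ?_
    field_simp
    ring
  have hint : IntegrableOn (fun t => Real.exp (-t) * Real.log t - Real.exp (-t) / t) (Ioi x) :=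
    ((intOn_exp_log.mono_set (Ioi_subset_Ioi hx.le))).sub (intOn_exp_div hx)
  have hcont : ContinuousWithinAt (fun t => -(Real.exp (-t) * Real.log t)) (Ici x) x := by
    refine ContinuousAt.continuousWithinAt ?_
    exact (((Real.continuous_exp.comp continuous_neg).continuousAt).mul
      (Real.continuousAt_log hx.ne')).neg
  have key := integral_Ioi_of_hasDerivAt_of_tendsto hcont hderiv hint tendsto_exp_log_atTop
  rw [integral_sub (intOn_exp_log.mono_set (Ioi_subset_Ioi hx.le)) (intOn_exp_div hx)] at key
  simp only [zero_sub, neg_neg] at key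
  unfold E
  linarith

lemma tendsto_integral_Ioi_exp_log :
    Filter.Tendsto (fun x => ∫ t in Ioi x, Real.exp (-t) * Real.log t)
      (nhdsWithin 0 (Ioi 0)) (nhds (∫ t in Ioi (0:ℝ), Real.exp (-t) * Real.log t)) := by
  have hsplit : ∀ x : ℝ, 0 < x →
      (∫ t in Ioi x, Real.exp (-t) * Real.log t)
        = (∫ t in Ioi (0:ℝ), Real.exp (-t) * Real.log t)
          - ∫ t in Ioc 0 x, Real.exp (-t) * Real.log t := by
    intro x hx
    have : Ioi (0:ℝ) = Ioc 0 x ∪ Ioi x := (Ioc_union_Ioi_eq_Ioi hx.le).symm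
    rw [eq_sub_iff_add_eq, add_comm, this,
      setIntegral_union Ioc_disjoint_Ioi_same measurableSet_Ioi
        (intOn_exp_log.mono_set (this ▸ subset_union_left))
        (intOn_exp_log.mono_set (this ▸ subset_union_right))]
  have hzero : Filter.Tendsto (fun x => ∫ t in Ioc (0:ℝ) x, Real.exp (-t) * Real.log t)
      (nhdsWithin 0 (Ioi 0)) (nhds 0) := by
    have hint : Integrable (fun t => Real.exp (-t) * Real.log t)
        (volume.restrict (Ioi (0:ℝ))) := intOn_exp_log
    have hmeas : Filter.Tendsto ((volume.restrict (Ioi (0:ℝ))) ∘ (fun x => Ioc (0:ℝ) x))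
        (nhdsWithin 0 (Ioi 0)) (nhds 0) := by
      have : ∀ x : ℝ, (volume.restrict (Ioi (0:ℝ))) (Ioc (0:ℝ) x) = ENNReal.ofReal x := by
        intro x
        rw [Measure.restrict_apply measurableSet_Ioc]
        rcases le_or_gt x 0 with h | h
        · simp [Ioc_eq_empty (by exact fun hh => absurd hh (not_lt.2 h)), ENNReal.ofReal_eq_zero.2 h]
        · rw [Ioc_inter_Ioi, sup_of_le_left le_rfl, Real.volume_Ioc, sub_zero]
      simp only [Function.comp_def, this]
      have : Filter.Tendsto (fun x : ℝ => ENNReal.ofReal x) (nhdsWithin 0 (Ioi 0))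
          (nhds (ENNReal.ofReal 0)) :=
        (ENNReal.continuous_ofReal.tendsto 0).comp nhdsWithin_le_nhds
      simpa using this
    have := hint.tendsto_setIntegral_nhds_zero hmeas
    refine this.congr (fun x => ?_)
    rw [Measure.restrict_restrict measurableSet_Ioc]
    congr 1
    rw [Ioc_inter_Ioi, sup_of_le_left le_rfl]
  have : Filter.Tendsto (fun x => (∫ t in Ioi (0:ℝ), Real.exp (-t) * Real.log t)
      - ∫ t in Ioc 0 x, Real.exp (-t) * Real.log t) (nhdsWithin 0 (Ioi 0))
      (nhds ((∫ t in Ioi (0:ℝ), Real.exp (-t) * Real.log t) - 0)) :=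
    tendsto_const_nhds.sub hzero
  rw [sub_zero] at this
  refine this.congr' ?_
  filter_upwards [self_mem_nhdsWithin] with x hx
  exact (hsplit x hx).symm

lemma tendsto_E_add_log :
    Filter.Tendsto (fun x => E x + Real.log x) (nhdsWithin 0 (Ioi 0))
      (nhds (-Real.eulerMascheroniConstant)) := by
  have h1 : Filter.Tendsto (fun x : ℝ => (1 - Real.exp (-x)) / x) (nhdsWithin 0 (Ioi 0))
      (nhds 1) := by
    have hd : HasDerivAt (fun x : ℝ => 1 - Real.exp (-x)) 1 0 := by
      have : HasDerivAt (fun x : ℝ => Real.exp (-x)) (-Real.exp (-0)) 0 := by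
        simpa [Function.comp_def] using (Real.hasDerivAt_exp (-0)).comp 0 (hasDerivAt_neg 0)
      simpa using (this.const_sub 1)
    have := hasDerivAt_iff_tendsto_slope.1 hd
    have h2 := this.mono_left (nhdsWithin_mono 0 (fun y (hy : y ∈ Ioi 0) => ne_of_gt hy))
    refine h2.congr' ?_
    filter_upwards [self_mem_nhdsWithin] with y hy
    simp [slope_def_field, div_eq_iff (ne_of_gt (show (0:ℝ) < y from hy))]
  have h2 : Filter.Tendsto (fun x : ℝ => x * Real.log x) (nhdsWithin 0 (Ioi 0)) (nhds 0) := by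
    have := (continuous_mul_log.tendsto 0).mono_left (nhdsWithin_le_nhds (s := Ioi 0))
    simpa using this
  have h3 : Filter.Tendsto (fun x : ℝ => (1 - Real.exp (-x)) * Real.log x)
      (nhdsWithin 0 (Ioi 0)) (nhds 0) := by
    have := h1.mul h2
    rw [one_mul] at this
    refine this.congr' ?_
    filter_upwards [self_mem_nhdsWithin] with y hy
    have : (y:ℝ) ≠ 0 := ne_of_gt hy
    field_simp
  have h4 := tendsto_integral_Ioi_exp_log
  rw [integral_exp_log] at h4
  have := h4.add h3
  rw [add_zero] at this
  refine this.congr' ?_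
  filter_upwards [self_mem_nhdsWithin] with y hy
  rw [E_eq hy]
  ring

lemma contOn_f1 : ContinuousOn (fun t : ℝ => Real.exp (-t) / t) (Ioi 0) :=
  (Real.continuous_exp.comp continuous_neg).continuousOn.div continuousOn_id
    (fun t ht => ne_of_gt ht)

lemma hasDerivAt_E {x : ℝ} (hx : 0 < x) : HasDerivAt E (-(Real.exp (-x) / x)) x := by
  set c := x / 2 with hc
  have hc0 : 0 < c := by positivity
  have hcx : c < x := by simp [hc]; linarith
  have heq : E =ᶠ[nhds x] (fun y => E c - ∫ t in c..y, Real.exp (-t) / t) := by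
    filter_upwards [isOpen_Ioi.mem_nhds (show x ∈ Ioi c from hcx)] with y hy
    have hcy : c ≤ y := le_of_lt hy
    have hsplit : Ioi c = Ioc c y ∪ Ioi y := (Ioc_union_Ioi_eq_Ioi hcy).symm
    have : E c = (∫ t in Ioc c y, Real.exp (-t) / t) + E y := by
      unfold E
      rw [hsplit, setIntegral_union Ioc_disjoint_Ioi_same measurableSet_Ioi
        ((intOn_exp_div hc0).mono_set (hsplit ▸ subset_union_left))
        ((intOn_exp_div hc0).mono_set (hsplit ▸ subset_union_right))]
    rw [intervalIntegral.integral_of_le hcy]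
    linarith
  have hFTC : HasDerivAt (fun y => E c - ∫ t in c..y, Real.exp (-t) / t)
      (-(Real.exp (-x) / x)) x := by
    have h1 : IntervalIntegrable (fun t : ℝ => Real.exp (-t) / t) volume c x := by
      refine (contOn_f1.mono ?_).intervalIntegrable
      rw [uIcc_of_le hcx.le]
      exact fun t ht => lt_of_lt_of_le hc0 ht.1
    have h2 : StronglyMeasurableAtFilter (fun t : ℝ => Real.exp (-t) / t) (nhds x) :=
      contOn_f1.stronglyMeasurableAtFilter isOpen_Ioi x hx
    have h3 : ContinuousAt (fun t : ℝ => Real.exp (-t) / t) x :=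
      contOn_f1.continuousAt (isOpen_Ioi.mem_nhds hx)
    exact ((intervalIntegral.integral_hasDerivAt_right h1 h2 h3).const_sub (E c))
  exact hFTC.congr_of_eventuallyEq heq

lemma E_nonneg {x : ℝ} (hx : 0 < x) : 0 ≤ E x := by
  refine setIntegral_nonneg measurableSet_Ioi (fun t ht => ?_)
  have : 0 < t := hx.trans ht
  positivity

lemma tendsto_E_atTop : Filter.Tendsto E Filter.atTop (nhds 0) := by
  have hU : Filter.Tendsto (fun x : ℝ => Real.exp (-x)) Filter.atTop (nhds 0) := by
    simpa using Real.tendsto_exp_neg_atTop_nhds_zero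
  refine tendsto_of_tendsto_of_tendsto_of_le_of_le' tendsto_const_nhds hU ?_ ?_
  · filter_upwards [Filter.eventually_gt_atTop (0:ℝ)] with x hx using E_nonneg hx
  · filter_upwards [Filter.eventually_ge_atTop (1:ℝ)] with x hx
    have hx0 : (0:ℝ) < x := by linarith
    have : E x ≤ ∫ t in Ioi x, Real.exp (-t) := by
      refine setIntegral_mono_on (intOn_exp_div hx0) ?_ measurableSet_Ioi ?_
      · simpa using exp_neg_integrableOn_Ioi x zero_lt_one
      · intro t ht
        have ht1 : (1:ℝ) ≤ t := hx.trans (le_of_lt ht)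
        rw [div_le_iff₀ (by linarith)]
        nlinarith [Real.exp_pos (-t)]
    have hval : ∫ t in Ioi x, Real.exp (-t) = Real.exp (-x) := by
      simpa using integral_exp_neg_Ioi x
    linarith [this, hval ▸ this]

lemma log_slope_anti {p w : ℝ} (hp : 0 < p) (hpw : p ≤ w) :
    Real.log (1 + w) * p ≤ Real.log (1 + p) * w := by
  rcases eq_or_lt_of_le hpw with rfl | hlt
  · exact le_of_eq (by ring)
  have hw : 0 < w := hp.trans hlt
  have hconc := strictConcaveOn_log_Ioi.concaveOn
  have key := hconc.2 (mem_Ioi.2 one_pos) (mem_Ioi.2 (by linarith : (0:ℝ) < 1 + w))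
    (by rw [sub_nonneg]; exact div_le_one_of_le₀ hpw hw.le : (0:ℝ) ≤ 1 - p/w) (by positivity : (0:ℝ) ≤ p/w) (by field_simp; ring)
  have hcomb : (1 - p/w) • (1:ℝ) + (p/w) • (1 + w) = 1 + p := by
    simp only [smul_eq_mul]
    field_simp
    ring
  rw [hcomb] at key
  simp only [smul_eq_mul, Real.log_one, mul_zero, zero_add] at key
  have : p / w * Real.log (1 + w) ≤ Real.log (1 + p) := key
  have h2 := mul_le_mul_of_nonneg_right this hw.le
  have h3 : p / w * Real.log (1 + w) * w = Real.log (1 + w) * p := by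
    field_simp
  rw [h3] at h2
  linarith

lemma phi_neg_mono {a p w : ℝ} (hp : 0 < p) (hpw : p ≤ w)
    (h : p + Real.log (1 + p) - a * p < 0) : w + Real.log (1 + w) - a * w < 0 := by
  have hw : 0 < w := lt_of_lt_of_le hp hpw
  have key := log_slope_anti hp hpw
  nlinarith [mul_pos hp hw]

lemma h_deriv {a : ℝ} (t : ℝ) :
    HasDerivAt (fun t => a * t * Real.exp t - (Real.exp (a * t) - 1))
      (a * ((1 + t) * Real.exp t - Real.exp (a * t))) t := by
  have h1 : HasDerivAt (fun t : ℝ => a * t * Real.exp t)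
      (a * Real.exp t + a * t * Real.exp t) t := by
    have := ((hasDerivAt_id t).const_mul a).mul (Real.hasDerivAt_exp t)
    simpa [Pi.mul_def] using this
  have h2 : HasDerivAt (fun t : ℝ => Real.exp (a * t) - 1) (a * Real.exp (a * t)) t := by
    have := (Real.hasDerivAt_exp (a * t)).comp t ((hasDerivAt_id t).const_mul a)
    simpa [mul_comm] using this.sub_const 1
  refine (h1.sub h2).congr_deriv ?_
  ring

/-- single-sign-change structure for `h`. -/
lemma h_structure {a y z : ℝ} (ha : 1 < a) (hy : 0 < y) (hyz : y ≤ z)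
    (hz : 0 ≤ a * z * Real.exp z - (Real.exp (a * z) - 1)) :
    0 ≤ a * y * Real.exp y - (Real.exp (a * y) - 1) := by
  by_contra hneg
  push_neg at hneg
  set h : ℝ → ℝ := fun t => a * t * Real.exp t - (Real.exp (a * t) - 1) with hh
  have h0 : h 0 = 0 := by simp [hh]
  -- MVT: get p ∈ (0, y) with h' p < 0
  obtain ⟨p, hpmem, hslope⟩ := exists_hasDerivAt_eq_slope h
    (fun t => a * ((1 + t) * Real.exp t - Real.exp (a * t))) hy
    (fun t _ => (h_deriv t).continuousAt.continuousWithinAt) (fun t _ => h_deriv t)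
  rw [h0, sub_zero, sub_zero] at hslope
  have hslope_neg : a * ((1 + p) * Real.exp p - Real.exp (a * p)) < 0 := by
    rw [hslope]
    exact div_neg_of_neg_of_pos hneg hy
  have ha0 : 0 < a := by linarith
  have hexp0 : (1 + p) * Real.exp p < Real.exp (a * p) := by nlinarith
  have hphi : p + Real.log (1 + p) - a * p < 0 := by
    have h1p : (0:ℝ) < 1 + p := by linarith [hpmem.1]
    have := Real.log_lt_log (by positivity) hexp0
    rw [Real.log_mul h1p.ne' (Real.exp_pos p).ne', Real.log_exp, Real.log_exp] at this
    linarith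
  -- hence φ < 0 on [p, ∞), so h strictly decreasing on [p, ∞)
  have hanti : StrictAntiOn h (Ici p) := by
    refine strictAntiOn_of_hasDerivWithinAt_neg (convex_Ici p)
      (fun t _ => (h_deriv t).continuousAt.continuousWithinAt)
      (fun t ht => ((h_deriv (a := a) t).hasDerivWithinAt)) (fun t ht => ?_)
    rw [interior_Ici] at ht
    have htp : p < t := ht
    have hphit : t + Real.log (1 + t) - a * t < 0 := phi_neg_mono hpmem.1 htp.le hphi
    have h1t : (0:ℝ) < 1 + t := by nlinarith [hpmem.1]
    have : (1 + t) * Real.exp t < Real.exp (a * t) := by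
      have := Real.exp_lt_exp.2 (show t + Real.log (1 + t) < a * t by linarith)
      rwa [Real.exp_add, Real.exp_log h1t, mul_comm (Real.exp t)] at this
    nlinarith
  have hyIci : y ∈ Ici p := le_of_lt hpmem.2
  have hzIci : z ∈ Ici p := le_trans hyIci.out hyz
  rcases eq_or_lt_of_le hyz with rfl | hlt
  · exact absurd hz (not_le.2 hneg)
  · have := hanti hyIci hzIci hlt
    change h z < h y at this
    have : h z < 0 := lt_trans this hneg
    exact absurd hz (not_le.2 this)

lemma one_sub_exp_pos {y : ℝ} (hy : 0 < y) : 0 < 1 - Real.exp (-y) := by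
  have := Real.exp_lt_one_iff.2 (neg_lt_zero.2 hy)
  linarith

lemma hasDerivAt_logterm {b y : ℝ} (hb : 0 < b) (hy : 0 < y) :
    HasDerivAt (fun y => Real.log (1 - Real.exp (-(b * y))))
      (b * Real.exp (-(b * y)) / (1 - Real.exp (-(b * y)))) y := by
  have hby : 0 < b * y := mul_pos hb hy
  have hpos : 0 < 1 - Real.exp (-(b * y)) := one_sub_exp_pos hby
  have h1 : HasDerivAt (fun y : ℝ => 1 - Real.exp (-(b * y))) (b * Real.exp (-(b * y))) y := by
    have h0 : HasDerivAt (fun y : ℝ => -(b * y)) (-b) y := by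
      simpa [Pi.neg_def] using ((hasDerivAt_id y).const_mul b).neg
    have := (Real.hasDerivAt_exp (-(b * y))).comp y h0
    have := this.const_sub 1
    refine this.congr_deriv ?_
    ring
  have := (Real.hasDerivAt_log hpos.ne').comp y h1
  refine this.congr_deriv ?_
  field_simp

lemma tendsto_logterm_atTop {b : ℝ} (hb : 0 < b) :
    Filter.Tendsto (fun y => Real.log (1 - Real.exp (-(b * y)))) Filter.atTop (nhds 0) := by
  have h1 : Filter.Tendsto (fun y : ℝ => -(b * y)) Filter.atTop Filter.atBot := by
    exact Filter.tendsto_neg_atTop_atBot.comp (Filter.tendsto_id.const_mul_atTop hb)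
  have h2 : Filter.Tendsto (fun y : ℝ => Real.exp (-(b * y))) Filter.atTop (nhds 0) :=
    Real.tendsto_exp_atBot.comp h1
  have h3 : Filter.Tendsto (fun y : ℝ => 1 - Real.exp (-(b * y))) Filter.atTop (nhds 1) := by
    simpa using (tendsto_const_nhds (x := (1:ℝ))).sub h2
  have h4 := (Real.continuousAt_log one_ne_zero).tendsto.comp h3
  simpa [Function.comp_def] using h4

/-- upper bound -/
lemma E_le {x : ℝ} (hx : 0 < x) : E x ≤ -Real.log (1 - Real.exp (-x)) := by
  set u : ℝ → ℝ := fun y => -Real.log (1 - Real.exp (-y)) - E y with hu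
  have hderiv : ∀ y ∈ Ioi (0:ℝ), HasDerivAt u
      (-(Real.exp (-y) / (1 - Real.exp (-y))) + Real.exp (-y) / y) y := by
    intro y hy
    have h1 := (hasDerivAt_logterm one_pos hy).neg
    simp only [one_mul] at h1
    have := h1.sub (hasDerivAt_E hy)
    refine this.congr_deriv ?_
    ring
  have hneg : ∀ y ∈ Ioi (0:ℝ),
      (-(Real.exp (-y) / (1 - Real.exp (-y))) + Real.exp (-y) / y) < 0 := by
    intro y hy
    have hy0 : (0:ℝ) < y := hy
    have hpos : 0 < 1 - Real.exp (-y) := one_sub_exp_pos hy0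
    have hlt : 1 - Real.exp (-y) < y := by
      have := Real.add_one_lt_exp (show (-y) ≠ 0 by exact neg_ne_zero.2 hy0.ne')
      linarith
    have key : Real.exp (-y) / y < Real.exp (-y) / (1 - Real.exp (-y)) :=
      div_lt_div_of_pos_left (Real.exp_pos _) hpos hlt
    linarith
  have hanti : StrictAntiOn u (Ioi 0) := by
    refine strictAntiOn_of_hasDerivWithinAt_neg (convex_Ioi 0)
      (f' := fun y => -(Real.exp (-y) / (1 - Real.exp (-y))) + Real.exp (-y) / y)
      (fun y hy => ((hderiv y hy).continuousAt).continuousWithinAt) ?_ ?_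
    · intro y hy; rw [interior_Ioi] at hy; exact (hderiv y hy).hasDerivWithinAt
    · intro y hy; rw [interior_Ioi] at hy; exact hneg y hy
  have htend : Filter.Tendsto u Filter.atTop (nhds 0) := by
    have h1 := tendsto_logterm_atTop one_pos
    have := (h1.neg).sub tendsto_E_atTop
    simpa [hu, one_mul] using this
  have hge : 0 ≤ u x := by
    refine le_of_tendsto htend ?_
    filter_upwards [Filter.eventually_gt_atTop x] with y hy
    exact le_of_lt (hanti hx (hx.trans hy) hy)
  simp only [hu] at hge
  linarith

section Lower

local notation "γ" => Real.eulerMascheroniConstant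

lemma one_lt_a : 1 < Real.exp γ := by
  rw [show (1:ℝ) = Real.exp 0 by simp]
  exact Real.exp_lt_exp.2 (by linarith [Real.one_half_lt_eulerMascheroniConstant])

noncomputable def g (y : ℝ) : ℝ := E y + Real.log (1 - Real.exp (-(Real.exp γ * y)))

lemma hasDerivAt_g {y : ℝ} (hy : 0 < y) : HasDerivAt g
    (-(Real.exp (-y) / y) + Real.exp γ * Real.exp (-(Real.exp γ * y))
      / (1 - Real.exp (-(Real.exp γ * y)))) y :=
  (hasDerivAt_E hy).add (hasDerivAt_logterm (by linarith [one_lt_a]) hy)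

lemma g_deriv_sign_nonneg {y : ℝ} (hy : 0 < y)
    (hh : 0 ≤ Real.exp γ * y * Real.exp y - (Real.exp (Real.exp γ * y) - 1)) :
    0 ≤ -(Real.exp (-y) / y) + Real.exp γ * Real.exp (-(Real.exp γ * y))
      / (1 - Real.exp (-(Real.exp γ * y))) := by
  set a := Real.exp γ
  have ha : 1 < a := one_lt_a
  have hay : 0 < a * y := mul_pos (by linarith) hy
  have hB : 0 < 1 - Real.exp (-(a * y)) := one_sub_exp_pos hay
  have key : Real.exp (-y) / y ≤ a * Real.exp (-(a * y)) / (1 - Real.exp (-(a * y))) := by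
    rw [div_le_div_iff₀ hy hB]
    have e1 : Real.exp (-y) * Real.exp y = 1 := by rw [← Real.exp_add]; simp
    have e2 : Real.exp (-(a * y)) * Real.exp (a * y) = 1 := by rw [← Real.exp_add]; simp
    nlinarith [Real.exp_pos (-y), Real.exp_pos (-(a*y)), Real.exp_pos y, Real.exp_pos (a*y),
      mul_nonneg (mul_nonneg hh (Real.exp_pos (-y)).le) (Real.exp_pos (-(a*y))).le]
  linarith

lemma g_deriv_sign_neg {y : ℝ} (hy : 0 < y)
    (hh : Real.exp γ * y * Real.exp y - (Real.exp (Real.exp γ * y) - 1) < 0) :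
    -(Real.exp (-y) / y) + Real.exp γ * Real.exp (-(Real.exp γ * y))
      / (1 - Real.exp (-(Real.exp γ * y))) < 0 := by
  set a := Real.exp γ
  have ha : 1 < a := one_lt_a
  have hay : 0 < a * y := mul_pos (by linarith) hy
  have hB : 0 < 1 - Real.exp (-(a * y)) := one_sub_exp_pos hay
  have key : a * Real.exp (-(a * y)) / (1 - Real.exp (-(a * y))) < Real.exp (-y) / y := by
    rw [div_lt_div_iff₀ hB hy]
    have e1 : Real.exp (-y) * Real.exp y = 1 := by rw [← Real.exp_add]; simp
    have e2 : Real.exp (-(a * y)) * Real.exp (a * y) = 1 := by rw [← Real.exp_add]; simp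
    nlinarith [Real.exp_pos (-y), Real.exp_pos (-(a*y)), Real.exp_pos y, Real.exp_pos (a*y),
      mul_pos (mul_pos (neg_pos.2 hh) (Real.exp_pos (-y))) (Real.exp_pos (-(a*y)))]
  linarith

lemma tendsto_g_zero : Filter.Tendsto g (nhdsWithin 0 (Ioi 0)) (nhds 0) := by
  set a := Real.exp γ
  have ha : 1 < a := one_lt_a
  have ha0 : 0 < a := by linarith
  have h1 := tendsto_E_add_log
  have h2 : Filter.Tendsto (fun y => Real.log (1 - Real.exp (-(a * y))) - Real.log y)
      (nhdsWithin 0 (Ioi 0)) (nhds γ) := by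
    have hslope : Filter.Tendsto (fun y : ℝ => (1 - Real.exp (-(a * y))) / y)
        (nhdsWithin 0 (Ioi 0)) (nhds a) := by
      have hd : HasDerivAt (fun y : ℝ => 1 - Real.exp (-(a * y))) a 0 := by
        have h0 : HasDerivAt (fun y : ℝ => -(a * y)) (-a) 0 := by
          simpa [Pi.neg_def] using ((hasDerivAt_id (0:ℝ)).const_mul a).neg
        have := ((Real.hasDerivAt_exp (-(a * 0))).comp 0 h0).const_sub 1
        simpa using this
      have := hasDerivAt_iff_tendsto_slope.1 hd
      have h2 := this.mono_left (nhdsWithin_mono 0 (fun y (hy : y ∈ Ioi 0) => ne_of_gt hy))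
      refine h2.congr' ?_
      filter_upwards [self_mem_nhdsWithin] with y hy
      simp [slope_def_field]
    have hlog := (Real.continuousAt_log ha0.ne').tendsto.comp hslope
    have : Real.log a = γ := Real.log_exp γ
    rw [this] at hlog
    refine hlog.congr' ?_
    filter_upwards [self_mem_nhdsWithin] with y hy
    have hy0 : 0 < y := hy
    have hnum : 0 < 1 - Real.exp (-(a * y)) := one_sub_exp_pos (mul_pos ha0 hy0)
    simp only [Function.comp_apply]
    exact Real.log_div hnum.ne' hy0.ne'
  have := h1.add h2
  rw [show -γ + γ = 0 by ring] at this
  refine this.congr' ?_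
  filter_upwards [self_mem_nhdsWithin] with y hy
  unfold g
  ring

lemma tendsto_g_atTop : Filter.Tendsto g Filter.atTop (nhds 0) := by
  have := tendsto_E_atTop.add (tendsto_logterm_atTop (show (0:ℝ) < Real.exp γ by
    linarith [one_lt_a]))
  rw [add_zero] at this
  exact this

lemma E_ge {x : ℝ} (hx : 0 < x) :
    -Real.log (1 - Real.exp (-(Real.exp γ * x))) ≤ E x := by
  set a := Real.exp γ with hadef
  have ha : 1 < a := one_lt_a
  have hgoal : 0 ≤ g x := by
    rcases le_or_gt 0 (a * x * Real.exp x - (Real.exp (a * x) - 1)) with hsign | hsign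
    · -- g is monotone on (0, x]
      have hmono : MonotoneOn g (Ioc 0 x) := by
        refine monotoneOn_of_hasDerivWithinAt_nonneg (convex_Ioc 0 x)
          (f' := fun y => -(Real.exp (-y) / y) + a * Real.exp (-(a * y))
            / (1 - Real.exp (-(a * y))))
          (fun y hy => ((hasDerivAt_g hy.1).continuousAt).continuousWithinAt) ?_ ?_
        · intro y hy
          rw [interior_Ioc] at hy
          exact (hasDerivAt_g hy.1).hasDerivWithinAt
        · intro y hy
          rw [interior_Ioc] at hy
          exact g_deriv_sign_nonneg hy.1 (h_structure ha hy.1 hy.2.le hsign)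
      refine le_of_tendsto tendsto_g_zero ?_
      filter_upwards [Ioo_mem_nhdsGT_of_mem (show (0:ℝ) ∈ Ico 0 x from ⟨le_rfl, hx⟩)]
        with y hy
      exact hmono ⟨hy.1, hy.2.le⟩ ⟨hx, le_rfl⟩ hy.2.le
    · -- g is antitone on [x, ∞)
      have hanti : AntitoneOn g (Ici x) := by
        refine antitoneOn_of_hasDerivWithinAt_nonpos (convex_Ici x)
          (f' := fun y => -(Real.exp (-y) / y) + a * Real.exp (-(a * y))
            / (1 - Real.exp (-(a * y))))
          (fun y hy => ((hasDerivAt_g (lt_of_lt_of_le hx hy)).continuousAt).continuousWithinAt)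
          ?_ ?_
        · intro y hy
          rw [interior_Ici] at hy
          exact (hasDerivAt_g (hx.trans hy)).hasDerivWithinAt
        · intro y hy
          rw [interior_Ici] at hy
          have hy0 : 0 < y := hx.trans hy
          have hhy : a * y * Real.exp y - (Real.exp (a * y) - 1) < 0 := by
            by_contra hcon
            push_neg at hcon
            exact absurd (h_structure ha hx (le_of_lt hy) hcon) (not_le.2 hsign)
          exact le_of_lt (g_deriv_sign_neg hy0 hhy)
      refine le_of_tendsto tendsto_g_atTop ?_
      filter_upwards [Filter.eventually_ge_atTop x] with y hy
      exact hanti (self_mem_Ici) hy hy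
  unfold g at hgoal
  linarith

end Lower


/-- for every `x > 0`, the exponential integral `∫_x^∞ e^{-t}/t dt`
is sandwiched between `-log (1 - e^{-a x})` and `-log (1 - e^{-x})`,
where `a = e^γ` with `γ` the Euler–Mascheroni constant. -/
theorem exp_integral_log_bounds (x : ℝ) (hx : 0 < x) :
    -Real.log (1 - Real.exp (-(Real.exp Real.eulerMascheroniConstant * x))) ≤
        ∫ t in Set.Ioi x, Real.exp (-t) / t ∧
      (∫ t in Set.Ioi x, Real.exp (-t) / t) ≤ -Real.log (1 - Real.exp (-x)) := by
  exact ⟨E_ge hx, E_le hx⟩
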